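/- Let F : ℕ × [0,1] → ℝ≥0 be bounded and measurable (Riemann integrable in the second argument), and for N ∈ ℕ define E(N) = Σ_{k∈ℕ} ∫₀¹ [N ≤ k]·e^{−(x+k−N)}·F(k,x) dx. Then ∫₀¹ e^{−x}·F(N,x) dx + (∫₀¹ (1 − e^{−x}) dx) · E(N+1) = E(N). -/
import Mathlib

open MeasureTheory intervalIntegral

noncomputable def negExpE (F : ℕ → ℝ → ℝ) (N : ℕ) : ℝ :=
  ∑' k : ℕ, ∫ x in (0:ℝ)..1,
    (if N ≤ k then (1:ℝ) else 0) * Real.exp (-(x + (k : ℝ) - (N : ℝ))) * F k x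

section aux

variable (F : ℕ → ℝ → ℝ)

noncomputable def negExpTerm (N k : ℕ) : ℝ :=
  ∫ x in (0:ℝ)..1,
    (if N ≤ k then (1:ℝ) else 0) * Real.exp (-(x + (k : ℝ) - (N : ℝ))) * F k x

lemma negExpTerm_integrable (hint : ∀ k, IntervalIntegrable (F k) volume 0 1) (N k : ℕ) :
    IntervalIntegrable (fun x => (if N ≤ k then (1:ℝ) else 0)
      * Real.exp (-(x + (k : ℝ) - (N : ℝ))) * F k x) volume 0 1 := by
  have hc : ContinuousOn (fun x : ℝ => (if N ≤ k then (1:ℝ) else 0)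
      * Real.exp (-(x + (k : ℝ) - (N : ℝ)))) (Set.uIcc 0 1) := by
    fun_prop
  simpa [mul_assoc] using (hint k).continuousOn_mul hc

lemma negExpTerm_nonneg (hnonneg : ∀ k, ∀ x ∈ Set.Icc (0:ℝ) 1, 0 ≤ F k x) (N k : ℕ) :
    0 ≤ negExpTerm F N k := by
  apply intervalIntegral.integral_nonneg (by norm_num)
  intro x hx
  have := hnonneg k x hx
  positivity

lemma negExpTerm_summable (hnonneg : ∀ k, ∀ x ∈ Set.Icc (0:ℝ) 1, 0 ≤ F k x)
    (hbdd : ∃ M : ℝ, ∀ k, ∀ x ∈ Set.Icc (0:ℝ) 1, F k x ≤ M)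
    (hint : ∀ k, IntervalIntegrable (F k) volume 0 1) (N : ℕ) :
    Summable (negExpTerm F N) := by
  obtain ⟨M, hM⟩ := hbdd
  set M' : ℝ := max M 0 with hM'
  have hM'0 : 0 ≤ M' := le_max_right _ _
  have hMle : ∀ k, ∀ x ∈ Set.Icc (0:ℝ) 1, F k x ≤ M' := fun k x hx =>
    (hM k x hx).trans (le_max_left _ _)
  have hgeom : Summable (fun k : ℕ => (M' * Real.exp N) * (Real.exp (-1)) ^ k) :=
    (summable_geometric_of_lt_one (Real.exp_nonneg _)
      (by rw [Real.exp_lt_one_iff]; norm_num)).mul_left _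
  refine Summable.of_nonneg_of_le (negExpTerm_nonneg F hnonneg N) (fun k => ?_) hgeom
  by_cases hk : N ≤ k
  · have hbound : ∀ x ∈ Set.Icc (0:ℝ) 1,
        (if N ≤ k then (1:ℝ) else 0) * Real.exp (-(x + (k : ℝ) - (N : ℝ))) * F k x
          ≤ (M' * Real.exp N) * (Real.exp (-1)) ^ k := by
      intro x hx
      rw [if_pos hk, one_mul]
      have h1 : Real.exp (-(x + (k : ℝ) - (N : ℝ))) ≤ Real.exp N * (Real.exp (-1)) ^ k := by
        rw [← Real.exp_nat_mul, ← Real.exp_add]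
        apply Real.exp_le_exp.mpr
        have := hx.1
        push_cast
        linarith
      calc Real.exp (-(x + (k : ℝ) - (N : ℝ))) * F k x
          ≤ (Real.exp N * (Real.exp (-1)) ^ k) * M' := by
            apply mul_le_mul h1 (hMle k x hx) (hnonneg k x hx)
            positivity
        _ = (M' * Real.exp N) * (Real.exp (-1)) ^ k := by ring
    calc negExpTerm F N k
        ≤ ∫ x in (0:ℝ)..1, (M' * Real.exp N) * (Real.exp (-1)) ^ k := by
          apply intervalIntegral.integral_mono_on (by norm_num)
            (negExpTerm_integrable F hint N k) intervalIntegrable_const hbound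
      _ = (M' * Real.exp N) * (Real.exp (-1)) ^ k := by simp
  · have : negExpTerm F N k = 0 := by
      simp [negExpTerm, if_neg hk]
    rw [this]
    positivity

lemma negExpE_eq (N : ℕ) : negExpE F N = ∑' k, negExpTerm F N k := rfl

end aux

theorem neg_exponential_recurrence
    (F : ℕ → ℝ → ℝ)
    (hnonneg : ∀ k, ∀ x ∈ Set.Icc (0:ℝ) 1, 0 ≤ F k x)
    (hbdd : ∃ M : ℝ, ∀ k, ∀ x ∈ Set.Icc (0:ℝ) 1, F k x ≤ M)
    (hint : ∀ k, IntervalIntegrable (F k) volume 0 1)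
    (N : ℕ) :
    (∫ x in (0:ℝ)..1, Real.exp (-x) * F N x)
      + (∫ x in (0:ℝ)..1, (1 - Real.exp (-x))) * negExpE F (N + 1)
      = negExpE F N := by
  -- ∫₀¹ (1 - e^{-x}) = e^{-1}
  have hconst : (∫ x in (0:ℝ)..1, (1 - Real.exp (-x))) = Real.exp (-1) := by
    have h1 : (∫ x in (0:ℝ)..1, Real.exp (-x)) = 1 - Real.exp (-1) := by
      have := intervalIntegral.integral_comp_neg (a := (0:ℝ)) (b := 1) Real.exp
      simp [integral_exp] at this ⊢
    rw [intervalIntegral.integral_sub intervalIntegrable_const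
      (Continuous.intervalIntegrable (by fun_prop) 0 1), h1]
    simp
  rw [hconst, negExpE_eq, negExpE_eq]
  have hsum := negExpTerm_summable F hnonneg hbdd hint
  -- shift to start at N
  have hshift : ∀ M : ℕ, (∑' k, negExpTerm F M k) = ∑' j, negExpTerm F M (M + j) := by
    intro M
    refine (Function.Injective.tsum_eq (f := negExpTerm F M) (fun a b h => by omega) ?_).symm
    intro k hk
    by_cases h : M ≤ k
    · exact ⟨k - M, by omega⟩
    · exact absurd (by simp [negExpTerm, if_neg h] : negExpTerm F M k = 0) hk
  rw [hshift N, hshift (N + 1)]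
  have hsummN : Summable (fun j => negExpTerm F N (N + j)) :=
    (hsum N).comp_injective (fun a b h => by omega)
  rw [Summable.tsum_eq_zero_add hsummN]
  have hNN : negExpTerm F N (N + 0) = ∫ x in (0:ℝ)..1, Real.exp (-x) * F N x := by
    simp [negExpTerm]
  have hshiftTerm : ∀ j : ℕ, negExpTerm F N (N + (j + 1))
      = Real.exp (-1) * negExpTerm F (N + 1) (N + 1 + j) := by
    intro j
    rw [negExpTerm, negExpTerm, ← intervalIntegral.integral_const_mul]
    congr 1
    ext x
    rw [if_pos (by omega), if_pos (by omega)]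
    push_cast
    rw [one_mul, one_mul, ← mul_assoc, ← Real.exp_add]
    ring_nf
  rw [hNN, tsum_congr hshiftTerm, tsum_mul_left]
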